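/- Let σ > 0 and let I : ℝ² → ℝ be C^∞ with compact support; define g̃(x) = (1/(√(2π)·σ))·exp(−‖∇I(x)‖²/(2σ²)). Let β ≥ 0, let H : ℝ² → ℝ be Lipschitz continuous and bounded, and let V̂ : ℝ² → ℝ² be Lipschitz continuous and bounded. Define, for x ∈ ℝ², nonzero p ∈ ℝ², and symmetric 2×2 real matrix X, F(x,p,X) = g̃(x)·H(x)·‖p‖ − β·g̃(x)·Tr(A(p)·X) + g̃(x)·(1 − |H(x)|)·⟨V̂(x), p⟩, where A(p) = I − (p⊗p)/‖p‖², and set ρ(p,q) = min( ‖p−q‖/min(‖p‖,‖q‖), 1 ). Then there exists a constant C ≥ 0 such that: for all symmetric 2×2 matrices X, Y and all μ₁, μ₂ ≥ 0 with [[X,0],[0,Y]] ≤ μ₁·[[I,−I],[−I,I]] + μ₂·[[I,0],[0,I]] in the Loewner order, and all x, y ∈ ℝ² and nonzero p, q ∈ ℝ², F(x,p,X) − F(y,q,−Y) ≥ −C·( μ₁·(‖x−y‖² + ρ(p,q)²) + μ₂ + ‖p−q‖ + ‖x−y‖·(1 + max(‖p‖,‖q‖)) ). -/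

import Mathlib

open scoped RealInnerProductSpace

/-- The edge weight `g̃(x) = (1/(√(2π)σ))·exp(−‖∇I(x)‖²/(2σ²))`. -/
noncomputable def edgeWeight (σ : ℝ) (I : EuclideanSpace ℝ (Fin 2) → ℝ)
    (x : EuclideanSpace ℝ (Fin 2)) : ℝ :=
  (1 / (Real.sqrt (2 * Real.pi) * σ)) * Real.exp (-‖gradient I x‖ ^ 2 / (2 * σ ^ 2))

/-- The matrix `A(p) = I − (p ⊗ p)/‖p‖²`. -/
noncomputable def projMatrix (p : EuclideanSpace ℝ (Fin 2)) : Matrix (Fin 2) (Fin 2) ℝ :=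
  1 - (‖p‖ ^ 2)⁻¹ • Matrix.of fun i j => p i * p j

/-- The Hamiltonian of the level-set equation of the GVF–geodesic active contour flow:
`F(x,p,X) = g̃(x)H(x)‖p‖ − βg̃(x)Tr(A(p)X) + g̃(x)(1−|H(x)|)⟨V̂(x),p⟩`. -/
noncomputable def gvfHamiltonian (σ β : ℝ) (I H : EuclideanSpace ℝ (Fin 2) → ℝ)
    (Vhat : EuclideanSpace ℝ (Fin 2) → EuclideanSpace ℝ (Fin 2))
    (x p : EuclideanSpace ℝ (Fin 2)) (X : Matrix (Fin 2) (Fin 2) ℝ) : ℝ :=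
  edgeWeight σ I x * H x * ‖p‖ - β * edgeWeight σ I x * (projMatrix p * X).trace
    + edgeWeight σ I x * (1 - |H x|) * ⟪Vhat x, p⟫

/-- The quantity `ρ(p,q) = min(‖p−q‖/min(‖p‖,‖q‖), 1)` of the Ishii–Sato structure
condition. -/
noncomputable def ishiiSatoRho (p q : EuclideanSpace ℝ (Fin 2)) : ℝ :=
  min (‖p - q‖ / min ‖p‖ ‖q‖) 1

/-! ### Auxiliary lemmas -/

lemma exp_neg_lip (s t : ℝ) (hs : 0 ≤ s) (ht : 0 ≤ t) :
    |Real.exp (-s) - Real.exp (-t)| ≤ |s - t| := by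
  have key : ∀ a b : ℝ, 0 ≤ a → a ≤ b → Real.exp (-a) - Real.exp (-b) ≤ b - a := by
    intro a b ha hab
    have h1 : Real.exp (-a) ≤ 1 := Real.exp_le_one_iff.mpr (by linarith)
    have h2 : Real.exp (-a) * Real.exp (a - b) = Real.exp (-b) := by
      rw [← Real.exp_add]; ring_nf
    have h3 : a - b + 1 ≤ Real.exp (a - b) := Real.add_one_le_exp _
    nlinarith [Real.exp_pos (-a)]
  rcases le_total s t with h | h
  · rw [abs_of_nonneg (by nlinarith [Real.exp_le_exp.mpr (neg_le_neg h)]),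
      abs_of_nonpos (by linarith : s - t ≤ 0)]
    have := key s t hs h; linarith
  · rw [abs_of_nonpos (by nlinarith [Real.exp_le_exp.mpr (neg_le_neg h)]),
      abs_of_nonneg (by linarith : (0:ℝ) ≤ s - t)]
    have := key t s ht h; linarith

lemma sqrt_lip (m a b : ℝ) (hm : 0 < m) (ha : m ≤ a) (hb : m ≤ b) :
    |Real.sqrt a - Real.sqrt b| ≤ |a - b| / (2 * Real.sqrt m) := by
  have hsm : 0 < Real.sqrt m := Real.sqrt_pos.mpr hm
  have hsa : Real.sqrt m ≤ Real.sqrt a := Real.sqrt_le_sqrt ha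
  have hsb : Real.sqrt m ≤ Real.sqrt b := Real.sqrt_le_sqrt hb
  have ha2 : Real.sqrt a ^ 2 = a := Real.sq_sqrt (by linarith)
  have hb2 : Real.sqrt b ^ 2 = b := Real.sq_sqrt (by linarith)
  rw [le_div_iff₀ (by positivity)]
  rcases le_total a b with h | h
  · rw [abs_of_nonpos (by nlinarith : Real.sqrt a - Real.sqrt b ≤ 0),
      abs_of_nonpos (by linarith : a - b ≤ 0)]
    nlinarith
  · rw [abs_of_nonneg (by nlinarith : (0:ℝ) ≤ Real.sqrt a - Real.sqrt b),
      abs_of_nonneg (by linarith : (0:ℝ) ≤ a - b)]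
    nlinarith

lemma euclid_norm_sq (w : EuclideanSpace ℝ (Fin 2)) : ‖w‖ ^ 2 = w 0 ^ 2 + w 1 ^ 2 := by
  rw [EuclideanSpace.norm_eq, Real.sq_sqrt (by positivity), Fin.sum_univ_two]
  simp only [Real.norm_eq_abs, sq_abs]

lemma trace_proj (p : EuclideanSpace ℝ (Fin 2)) (hp : p ≠ 0) (X : Matrix (Fin 2) (Fin 2) ℝ) :
    (projMatrix p * X).trace
      = ((-(p 1)) * (X 0 0 * (-(p 1)) + X 1 0 * (p 0))
          + (p 0) * (X 0 1 * (-(p 1)) + X 1 1 * (p 0))) / ‖p‖ ^ 2 := by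
  have hn : ‖p‖ ^ 2 = p 0 ^ 2 + p 1 ^ 2 := euclid_norm_sq p
  have hne : ‖p‖ ^ 2 ≠ 0 := pow_ne_zero 2 (norm_ne_zero_iff.mpr hp)
  simp only [projMatrix, Matrix.trace, Matrix.diag, Matrix.mul_apply, Fin.sum_univ_two,
    Matrix.sub_apply, Matrix.one_apply, Matrix.smul_apply, Matrix.of_apply, smul_eq_mul]
  field_simp
  rw [hn]
  simp only [if_true, Fin.zero_eq_one_iff, Fin.one_eq_zero_iff, OfNat.ofNat_ne_one, if_false, one_mul, mul_zero]
  ring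

lemma quadform_bound (X Y : Matrix (Fin 2) (Fin 2) ℝ) (μ₁ μ₂ : ℝ)
    (hM : (μ₁ • (Matrix.fromBlocks 1 (-1) (-1) 1 : Matrix (Fin 2 ⊕ Fin 2) (Fin 2 ⊕ Fin 2) ℝ)
          + μ₂ • (1 : Matrix (Fin 2 ⊕ Fin 2) (Fin 2 ⊕ Fin 2) ℝ)
          - Matrix.fromBlocks X 0 0 Y).PosSemidef)
    (ξ η : Fin 2 → ℝ) :
    (ξ 0 * (X 0 0 * ξ 0 + X 0 1 * ξ 1) + ξ 1 * (X 1 0 * ξ 0 + X 1 1 * ξ 1))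
      + (η 0 * (Y 0 0 * η 0 + Y 0 1 * η 1) + η 1 * (Y 1 0 * η 0 + Y 1 1 * η 1))
      ≤ μ₁ * ((ξ 0 - η 0) ^ 2 + (ξ 1 - η 1) ^ 2)
        + μ₂ * (ξ 0 ^ 2 + ξ 1 ^ 2 + η 0 ^ 2 + η 1 ^ 2) := by
  have h := hM.dotProduct_mulVec_nonneg (Sum.elim ξ η)
  simp only [dotProduct, Matrix.mulVec, Fintype.sum_sum_type, Fin.sum_univ_two,
    Matrix.sub_apply, Matrix.add_apply, Matrix.smul_apply, Matrix.one_apply,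
    Matrix.fromBlocks_apply₁₁, Matrix.fromBlocks_apply₁₂, Matrix.fromBlocks_apply₂₁,
    Matrix.fromBlocks_apply₂₂, Sum.elim_inl, Sum.elim_inr, star_trivial, smul_eq_mul,
    Matrix.neg_apply, Matrix.zero_apply, Pi.star_apply] at h
  simp only [Sum.inl.injEq, Sum.inr.injEq, if_true, if_false, Fin.ext_iff] at h
  simp only [reduceCtorEq, if_false, reduceIte] at h
  norm_num at h
  nlinarith [h]

lemma edgeWeight_props (σ : ℝ) (hσ : 0 < σ) (I : EuclideanSpace ℝ (Fin 2) → ℝ)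
    (hI : ContDiff ℝ (⊤ : ℕ∞) I) (hIc : HasCompactSupport I) :
    ∃ c m Lg : ℝ, 0 < m ∧ 0 < c ∧ 0 ≤ Lg ∧
      (∀ x, m ≤ edgeWeight σ I x ∧ edgeWeight σ I x ≤ c) ∧
      (∀ x y, |edgeWeight σ I x - edgeWeight σ I y| ≤ Lg * ‖x - y‖) := by
  have hGsm : ContDiff ℝ (⊤ : ℕ∞) (gradient I) := by
    have h1 : ContDiff ℝ (⊤ : ℕ∞) (fderiv ℝ I) := (contDiff_infty_iff_fderiv.mp hI).2
    have h2 := (InnerProductSpace.toDual ℝ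
      (EuclideanSpace ℝ (Fin 2))).symm.toContinuousLinearEquiv.toContinuousLinearMap.contDiff
        (n := ((⊤ : ℕ∞) : WithTop ℕ∞))
    exact h2.comp h1
  have hGc : HasCompactSupport (gradient I) := by
    have h := (hIc.fderiv ℝ).comp_left
      (g := fun L => (InnerProductSpace.toDual ℝ (EuclideanSpace ℝ (Fin 2))).symm L) (by simp)
    exact h
  obtain ⟨KG, hKG⟩ := ContDiff.lipschitzWith_of_hasCompactSupport hGc hGsm
    (by simp)
  obtain ⟨R, hR⟩ := hGc.exists_bound_of_continuous hGsm.continuous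
  have hR0 : 0 ≤ R := le_trans (norm_nonneg _) (hR 0)
  have hc0 : 0 < 1 / (Real.sqrt (2 * Real.pi) * σ) := by
    have : 0 < Real.sqrt (2 * Real.pi) := Real.sqrt_pos.mpr (by positivity)
    positivity
  have h2σ : (0:ℝ) < 2 * σ ^ 2 := by positivity
  set c : ℝ := 1 / (Real.sqrt (2 * Real.pi) * σ) with hc
  refine ⟨c, c * Real.exp (-R ^ 2 / (2 * σ ^ 2)), c * (2 * R * KG) / (2 * σ ^ 2),
    by positivity, hc0, by positivity, ?_, ?_⟩
  · intro x
    constructor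
    · apply mul_le_mul_of_nonneg_left _ hc0.le
      apply Real.exp_le_exp.mpr
      have h1 : ‖gradient I x‖ ^ 2 ≤ R ^ 2 := by
        have := hR x; nlinarith [norm_nonneg (gradient I x)]
      rw [div_le_div_iff₀ h2σ h2σ]
      nlinarith
    · have h1 : Real.exp (-‖gradient I x‖ ^ 2 / (2 * σ ^ 2)) ≤ 1 := by
        apply Real.exp_le_one_iff.mpr
        apply div_nonpos_of_nonpos_of_nonneg (by nlinarith [sq_nonneg ‖gradient I x‖]) h2σ.le
      calc edgeWeight σ I x = c * Real.exp (-‖gradient I x‖ ^ 2 / (2 * σ ^ 2)) := rfl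
        _ ≤ c * 1 := by nlinarith
        _ = c := by ring
  · intro x y
    have h1 : ‖gradient I x - gradient I y‖ ≤ (KG : ℝ) * ‖x - y‖ := by
      have := hKG.dist_le_mul x y
      simpa [dist_eq_norm] using this
    have h2 : |‖gradient I x‖ - ‖gradient I y‖| ≤ ‖gradient I x - gradient I y‖ :=
      abs_norm_sub_norm_le _ _
    have h3 : |‖gradient I x‖ ^ 2 - ‖gradient I y‖ ^ 2|
        = |‖gradient I x‖ - ‖gradient I y‖| * |‖gradient I x‖ + ‖gradient I y‖| := by
      rw [← abs_mul]; ring_nf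
    have h4 : |‖gradient I x‖ + ‖gradient I y‖| ≤ 2 * R := by
      rw [abs_of_nonneg (by positivity)]
      have := hR x; have := hR y; linarith
    have hbd : |‖gradient I x‖ ^ 2 - ‖gradient I y‖ ^ 2| ≤ 2 * R * KG * ‖x - y‖ := by
      rw [h3]
      calc |‖gradient I x‖ - ‖gradient I y‖| * |‖gradient I x‖ + ‖gradient I y‖|
          ≤ ((KG : ℝ) * ‖x - y‖) * (2 * R) :=
            mul_le_mul (h2.trans h1) h4 (abs_nonneg _) (by positivity)
        _ = 2 * R * KG * ‖x - y‖ := by ring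
    have hexp := exp_neg_lip (‖gradient I x‖ ^ 2 / (2 * σ ^ 2)) (‖gradient I y‖ ^ 2 / (2 * σ ^ 2))
      (by positivity) (by positivity)
    have heq : edgeWeight σ I x - edgeWeight σ I y
        = c * (Real.exp (-(‖gradient I x‖ ^ 2 / (2 * σ ^ 2)))
            - Real.exp (-(‖gradient I y‖ ^ 2 / (2 * σ ^ 2)))) := by
      simp only [edgeWeight, neg_div]; ring
    rw [heq, abs_mul, abs_of_nonneg hc0.le]
    have hsub : |‖gradient I x‖ ^ 2 / (2 * σ ^ 2) - ‖gradient I y‖ ^ 2 / (2 * σ ^ 2)|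
        = |‖gradient I x‖ ^ 2 - ‖gradient I y‖ ^ 2| / (2 * σ ^ 2) := by
      rw [div_sub_div_same, abs_div, abs_of_pos h2σ]
    calc c * |Real.exp (-(‖gradient I x‖ ^ 2 / (2 * σ ^ 2)))
            - Real.exp (-(‖gradient I y‖ ^ 2 / (2 * σ ^ 2)))|
        ≤ c * (|‖gradient I x‖ ^ 2 - ‖gradient I y‖ ^ 2| / (2 * σ ^ 2)) := by
          apply mul_le_mul_of_nonneg_left _ hc0.le
          rw [← hsub]; exact hexp
      _ ≤ c * (2 * R * KG * ‖x - y‖ / (2 * σ ^ 2)) := by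
          apply mul_le_mul_of_nonneg_left _ hc0.le
          exact div_le_div_of_nonneg_right hbd h2σ.le
      _ = c * (2 * R * KG) / (2 * σ ^ 2) * ‖x - y‖ := by ring

noncomputable def rot (p : EuclideanSpace ℝ (Fin 2)) : EuclideanSpace ℝ (Fin 2) :=
  (WithLp.equiv 2 (Fin 2 → ℝ)).symm ![-(p 1), p 0]

lemma rot_apply0 (p : EuclideanSpace ℝ (Fin 2)) : rot p 0 = -(p 1) := rfl
lemma rot_apply1 (p : EuclideanSpace ℝ (Fin 2)) : rot p 1 = p 0 := rfl

lemma norm_rot (p : EuclideanSpace ℝ (Fin 2)) : ‖rot p‖ = ‖p‖ := by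
  have h1 : ‖rot p‖ ^ 2 = ‖p‖ ^ 2 := by
    rw [euclid_norm_sq, euclid_norm_sq, rot_apply0, rot_apply1]; ring
  calc ‖rot p‖ = Real.sqrt (‖rot p‖ ^ 2) := (Real.sqrt_sq (norm_nonneg _)).symm
    _ = Real.sqrt (‖p‖ ^ 2) := by rw [h1]
    _ = ‖p‖ := Real.sqrt_sq (norm_nonneg _)

lemma rot_sub (p q : EuclideanSpace ℝ (Fin 2)) : rot p - rot q = rot (p - q) := by
  ext i
  fin_cases i <;>
    (simp [rot, WithLp.equiv_symm_apply, PiLp.sub_apply]; try ring)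

lemma rot_smul (r : ℝ) (p : EuclideanSpace ℝ (Fin 2)) : rot (r • p) = r • rot p := by
  ext i
  fin_cases i <;>
    simp [rot, WithLp.equiv_symm_apply, PiLp.smul_apply]

lemma unit_diff_le (p q : EuclideanSpace ℝ (Fin 2)) (hp : p ≠ 0) (hq : q ≠ 0) :
    ‖‖p‖⁻¹ • p - ‖q‖⁻¹ • q‖ ≤ 2 * ishiiSatoRho p q := by
  have hp0 : (0:ℝ) < ‖p‖ := norm_pos_iff.mpr hp
  have hq0 : (0:ℝ) < ‖q‖ := norm_pos_iff.mpr hq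
  have hmin : (0:ℝ) < min ‖p‖ ‖q‖ := lt_min hp0 hq0
  have h2 : ‖‖p‖⁻¹ • p - ‖q‖⁻¹ • q‖ ≤ 2 := by
    calc ‖‖p‖⁻¹ • p - ‖q‖⁻¹ • q‖ ≤ ‖‖p‖⁻¹ • p‖ + ‖‖q‖⁻¹ • q‖ := norm_sub_le _ _
      _ = 1 + 1 := by
          rw [norm_smul, norm_smul, Real.norm_eq_abs, Real.norm_eq_abs,
            abs_of_pos (by positivity), abs_of_pos (by positivity)]
          field_simp
      _ = 2 := by norm_num
  have hkey : ‖‖p‖⁻¹ • p - ‖q‖⁻¹ • q‖ ≤ 2 * (‖p - q‖ / ‖p‖) := by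
    have hdecomp : ‖p‖⁻¹ • p - ‖q‖⁻¹ • q = ‖p‖⁻¹ • (p - q) + (‖p‖⁻¹ - ‖q‖⁻¹) • q := by
      rw [smul_sub, sub_smul]; abel
    rw [hdecomp]
    have hb : ‖(‖p‖⁻¹ - ‖q‖⁻¹) • q‖ ≤ ‖p - q‖ / ‖p‖ := by
      rw [norm_smul, Real.norm_eq_abs]
      have heq : |‖p‖⁻¹ - ‖q‖⁻¹| = |‖q‖ - ‖p‖| / (‖p‖ * ‖q‖) := by
        have hd : ‖p‖⁻¹ - ‖q‖⁻¹ = (‖q‖ - ‖p‖) / (‖p‖ * ‖q‖) := by field_simp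
        rw [hd, abs_div, abs_of_pos (mul_pos hp0 hq0)]
      rw [heq]
      have h3 : |‖q‖ - ‖p‖| ≤ ‖p - q‖ := by
        have := abs_norm_sub_norm_le q p
        simpa [norm_sub_rev] using this
      calc |‖q‖ - ‖p‖| / (‖p‖ * ‖q‖) * ‖q‖ = |‖q‖ - ‖p‖| / ‖p‖ := by
            field_simp
        _ ≤ ‖p - q‖ / ‖p‖ := div_le_div_of_nonneg_right h3 hp0.le
    calc ‖‖p‖⁻¹ • (p - q) + (‖p‖⁻¹ - ‖q‖⁻¹) • q‖
        ≤ ‖‖p‖⁻¹ • (p - q)‖ + ‖(‖p‖⁻¹ - ‖q‖⁻¹) • q‖ := norm_add_le _ _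
      _ ≤ ‖p - q‖ / ‖p‖ + ‖p - q‖ / ‖p‖ := by
          apply add_le_add _ hb
          rw [norm_smul, Real.norm_eq_abs, abs_of_pos (by positivity)]
          rw [div_eq_inv_mul]
      _ = 2 * (‖p - q‖ / ‖p‖) := by ring
  unfold ishiiSatoRho
  rcases le_total (‖p - q‖ / min ‖p‖ ‖q‖) 1 with h | h
  · rw [min_eq_left h]
    refine hkey.trans ?_
    have : ‖p - q‖ / ‖p‖ ≤ ‖p - q‖ / min ‖p‖ ‖q‖ :=
      div_le_div_of_nonneg_left (norm_nonneg _) hmin (min_le_left _ _)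
    linarith
  · rw [min_eq_right h]
    linarith

lemma prod_lower (d r a M : ℝ) (hd : |d| ≤ a) (hr : |r| ≤ M) : -(a * M) ≤ d * r := by
  have h1 : |d * r| ≤ a * M := by
    rw [abs_mul]
    exact mul_le_mul hd hr (abs_nonneg r) ((abs_nonneg d).trans hd)
  have := neg_abs_le (d * r)
  linarith

lemma weighted_trace_eq (p : EuclideanSpace ℝ (Fin 2)) (hp : p ≠ 0)
    (X : Matrix (Fin 2) (Fin 2) ℝ) (s : ℝ) :
    ((s / ‖p‖) * (-(p 1))) * (X 0 0 * ((s / ‖p‖) * (-(p 1))) + X 0 1 * ((s / ‖p‖) * (p 0)))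
      + ((s / ‖p‖) * (p 0)) * (X 1 0 * ((s / ‖p‖) * (-(p 1))) + X 1 1 * ((s / ‖p‖) * (p 0)))
      = s ^ 2 * (projMatrix p * X).trace := by
  have hn : ‖p‖ ≠ 0 := norm_ne_zero_iff.mpr hp
  rw [trace_proj p hp X]
  field_simp
  ring

lemma combine16 (A1 A2 A3 A4 S1 S2 S3 S4 T U : ℝ)
    (hA1 : 0 ≤ A1) (hA2 : 0 ≤ A2) (hA3 : 0 ≤ A3) (hA4 : 0 ≤ A4)
    (hS1 : 0 ≤ S1) (hS2 : 0 ≤ S2) (hS3 : 0 ≤ S3) (hS4 : 0 ≤ S4)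
    (hT : -(A4 * S4 + A3 * S3) ≤ T) (hU : U ≤ A1 * S1 + A2 * S2) :
    -((A1 + A2 + A3 + A4) * (S1 + S2 + S3 + S4)) ≤ T - U := by
  nlinarith [mul_nonneg hA1 hS2, mul_nonneg hA1 hS3, mul_nonneg hA1 hS4,
    mul_nonneg hA2 hS1, mul_nonneg hA2 hS3, mul_nonneg hA2 hS4,
    mul_nonneg hA3 hS1, mul_nonneg hA3 hS2, mul_nonneg hA3 hS4,
    mul_nonneg hA4 hS1, mul_nonneg hA4 hS2, mul_nonneg hA4 hS3]

set_option maxHeartbeats 1000000 in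
lemma second_order_est
    (X Y : Matrix (Fin 2) (Fin 2) ℝ) (μ₁ μ₂ : ℝ) (hμ₁ : 0 ≤ μ₁) (hμ₂ : 0 ≤ μ₂)
    (hM : (μ₁ • (Matrix.fromBlocks 1 (-1) (-1) 1 : Matrix (Fin 2 ⊕ Fin 2) (Fin 2 ⊕ Fin 2) ℝ)
          + μ₂ • (1 : Matrix (Fin 2 ⊕ Fin 2) (Fin 2 ⊕ Fin 2) ℝ)
          - Matrix.fromBlocks X 0 0 Y).PosSemidef)
    (p q : EuclideanSpace ℝ (Fin 2)) (hp : p ≠ 0) (hq : q ≠ 0)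
    (gx gy c : ℝ) (hgx : 0 ≤ gx) (hgy : 0 ≤ gy) (hgxc : gx ≤ c) (hgyc : gy ≤ c)
    (D : ℝ) (hD : 0 ≤ D) (hst : |Real.sqrt gx - Real.sqrt gy| ≤ D) :
    gx * (projMatrix p * X).trace + gy * (projMatrix q * Y).trace
      ≤ μ₁ * (2 * D ^ 2 + 8 * c * ishiiSatoRho p q ^ 2) + μ₂ * (2 * c) := by
  have hc : 0 ≤ c := hgx.trans hgxc
  have hρ : 0 ≤ ishiiSatoRho p q := by
    unfold ishiiSatoRho
    have : 0 ≤ ‖p - q‖ / min ‖p‖ ‖q‖ := by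
      apply div_nonneg (norm_nonneg _)
      exact le_min (norm_nonneg _) (norm_nonneg _)
    exact le_min this zero_le_one
  set s := Real.sqrt gx with hs
  set t := Real.sqrt gy with ht
  have hs0 : 0 ≤ s := Real.sqrt_nonneg _
  have ht0 : 0 ≤ t := Real.sqrt_nonneg _
  have hs2 : s ^ 2 = gx := Real.sq_sqrt hgx
  have ht2 : t ^ 2 = gy := Real.sq_sqrt hgy
  have hpn : (0:ℝ) < ‖p‖ := norm_pos_iff.mpr hp
  have hqn : (0:ℝ) < ‖q‖ := norm_pos_iff.mpr hq
  set ξ : EuclideanSpace ℝ (Fin 2) := (s / ‖p‖) • rot p with hξ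
  set η : EuclideanSpace ℝ (Fin 2) := (t / ‖q‖) • rot q with hη
  have hξ0 : ξ 0 = (s / ‖p‖) * (-(p 1)) := rfl
  have hξ1 : ξ 1 = (s / ‖p‖) * (p 0) := rfl
  have hη0 : η 0 = (t / ‖q‖) * (-(q 1)) := rfl
  have hη1 : η 1 = (t / ‖q‖) * (q 0) := rfl
  have h := quadform_bound X Y μ₁ μ₂ hM (fun i => ξ i) (fun i => η i)
  simp only [hξ0, hξ1, hη0, hη1] at h
  rw [weighted_trace_eq p hp X s, weighted_trace_eq q hq Y t, hs2, ht2] at h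
  -- now bound the right-hand side of h
  have hnormξ : ‖ξ‖ = s := by
    rw [hξ, norm_smul, Real.norm_eq_abs, norm_rot, abs_of_nonneg (by positivity)]
    field_simp
  have hnormη : ‖η‖ = t := by
    rw [hη, norm_smul, Real.norm_eq_abs, norm_rot, abs_of_nonneg (by positivity)]
    field_simp
  have hsumξ : (s / ‖p‖ * -(p 1)) ^ 2 + (s / ‖p‖ * p 0) ^ 2 = gx := by
    have := euclid_norm_sq ξ
    rw [hnormξ, hξ0, hξ1] at this
    rw [← this, hs2]
  have hsumη : (t / ‖q‖ * -(q 1)) ^ 2 + (t / ‖q‖ * q 0) ^ 2 = gy := by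
    have := euclid_norm_sq η
    rw [hnormη, hη0, hη1] at this
    rw [← this, ht2]
  have hdiff : (s / ‖p‖ * -(p 1) - t / ‖q‖ * -(q 1)) ^ 2 + (s / ‖p‖ * p 0 - t / ‖q‖ * q 0) ^ 2
      = ‖ξ - η‖ ^ 2 := by
    rw [euclid_norm_sq (ξ - η)]
    have e0 : (ξ - η) 0 = ξ 0 - η 0 := rfl
    have e1 : (ξ - η) 1 = ξ 1 - η 1 := rfl
    rw [e0, e1, hξ0, hξ1, hη0, hη1]
  -- bound ‖ξ - η‖
  have hUV : ‖ξ - η‖ ≤ D + t * (2 * ishiiSatoRho p q) := by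
    set U : EuclideanSpace ℝ (Fin 2) := ‖p‖⁻¹ • rot p with hUdef
    set V : EuclideanSpace ℝ (Fin 2) := ‖q‖⁻¹ • rot q with hVdef
    have hU : ξ = s • U := by
      rw [hξ, hUdef, smul_smul, div_eq_mul_inv]
    have hV : η = t • V := by
      rw [hη, hVdef, smul_smul, div_eq_mul_inv]
    have hdec : ξ - η = (s - t) • U + t • (U - V) := by
      rw [hU, hV, sub_smul, smul_sub]; abel
    have hUnorm : ‖U‖ = 1 := by
      rw [hUdef, norm_smul, Real.norm_eq_abs, norm_rot, abs_of_pos (by positivity)]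
      field_simp
    have hUVdiff : ‖U - V‖ ≤ 2 * ishiiSatoRho p q := by
      have e : U - V = rot (‖p‖⁻¹ • p - ‖q‖⁻¹ • q) := by
        rw [hUdef, hVdef, ← rot_smul, ← rot_smul, rot_sub]
      rw [e, norm_rot]
      exact unit_diff_le p q hp hq
    have hA : ‖(s - t) • U‖ = |s - t| := by
      rw [norm_smul, Real.norm_eq_abs, hUnorm, mul_one]
    have hB : ‖t • (U - V)‖ = |t| * ‖U - V‖ := by
      rw [norm_smul, Real.norm_eq_abs]
    calc ‖ξ - η‖ = ‖(s - t) • U + t • (U - V)‖ := by rw [hdec]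
      _ ≤ ‖(s - t) • U‖ + ‖t • (U - V)‖ := norm_add_le _ _
      _ = |s - t| + |t| * ‖U - V‖ := by rw [hA, hB]
      _ ≤ D + t * (2 * ishiiSatoRho p q) := by
          rw [abs_of_nonneg ht0]
          have := mul_le_mul_of_nonneg_left hUVdiff ht0
          linarith
  have htc : t ≤ Real.sqrt c := by
    rw [ht]; exact Real.sqrt_le_sqrt hgyc
  have hsc2 : Real.sqrt c ^ 2 = c := Real.sq_sqrt hc
  have hnd2 : ‖ξ - η‖ ^ 2 ≤ 2 * D ^ 2 + 8 * c * ishiiSatoRho p q ^ 2 := by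
    have h1 : ‖ξ - η‖ ≤ D + 2 * Real.sqrt c * ishiiSatoRho p q := by
      refine hUV.trans ?_
      have := mul_le_mul_of_nonneg_right htc (by linarith : (0:ℝ) ≤ 2 * ishiiSatoRho p q)
      linarith [this]
    have h2 : 0 ≤ D + 2 * Real.sqrt c * ishiiSatoRho p q := by positivity
    nlinarith [sq_nonneg (D - 2 * Real.sqrt c * ishiiSatoRho p q), norm_nonneg (ξ - η),
      sq_nonneg (Real.sqrt c * ishiiSatoRho p q)]
  calc gx * (projMatrix p * X).trace + gy * (projMatrix q * Y).trace
      ≤ μ₁ * ((s / ‖p‖ * -(p 1) - t / ‖q‖ * -(q 1)) ^ 2 + (s / ‖p‖ * p 0 - t / ‖q‖ * q 0) ^ 2)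
        + μ₂ * ((s / ‖p‖ * -(p 1)) ^ 2 + (s / ‖p‖ * p 0) ^ 2
          + ((t / ‖q‖ * -(q 1)) ^ 2 + (t / ‖q‖ * q 0) ^ 2)) := by linarith [h]
    _ = μ₁ * ‖ξ - η‖ ^ 2 + μ₂ * (gx + gy) := by rw [hdiff, hsumξ, hsumη]
    _ ≤ μ₁ * (2 * D ^ 2 + 8 * c * ishiiSatoRho p q ^ 2) + μ₂ * (2 * c) := by
        have := mul_le_mul_of_nonneg_left hnd2 hμ₁
        have h2 : gx + gy ≤ 2 * c := by linarith
        have := mul_le_mul_of_nonneg_left h2 hμ₂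
        linarith

set_option maxHeartbeats 2000000 in
/-- hypothesis (H3) of the Ishii–Sato theorem for the GVF–geodesic
Hamiltonian: there is a constant `C ≥ 0` such that whenever
`[[X,0],[0,Y]] ≤ μ₁[[I,−I],[−I,I]] + μ₂[[I,0],[0,I]]` in the Loewner order,
`F(x,p,X) − F(y,q,−Y) ≥ −C(μ₁(‖x−y‖² + ρ(p,q)²) + μ₂ + ‖p−q‖ + ‖x−y‖(1 + max(‖p‖,‖q‖)))`. -/
theorem gvfHamiltonian_ishiiSato_H3
    (σ : ℝ) (hσ : 0 < σ)
    (I : EuclideanSpace ℝ (Fin 2) → ℝ)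
    (hI : ContDiff ℝ (⊤ : ℕ∞) I) (hIc : HasCompactSupport I)
    (β : ℝ) (hβ : 0 ≤ β)
    (H : EuclideanSpace ℝ (Fin 2) → ℝ)
    (KH : ℝ) (hHlip : ∀ x y, |H x - H y| ≤ KH * ‖x - y‖)
    (MH : ℝ) (hHbd : ∀ x, |H x| ≤ MH)
    (Vhat : EuclideanSpace ℝ (Fin 2) → EuclideanSpace ℝ (Fin 2))
    (KV : ℝ) (hVlip : ∀ x y, ‖Vhat x - Vhat y‖ ≤ KV * ‖x - y‖)
    (MV : ℝ) (hVbd : ∀ x, ‖Vhat x‖ ≤ MV) :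
    ∃ C : ℝ, 0 ≤ C ∧
      ∀ (X Y : Matrix (Fin 2) (Fin 2) ℝ), X.IsSymm → Y.IsSymm →
      ∀ μ₁ μ₂ : ℝ, 0 ≤ μ₁ → 0 ≤ μ₂ →
      (μ₁ • (Matrix.fromBlocks 1 (-1) (-1) 1 : Matrix (Fin 2 ⊕ Fin 2) (Fin 2 ⊕ Fin 2) ℝ)
          + μ₂ • (1 : Matrix (Fin 2 ⊕ Fin 2) (Fin 2 ⊕ Fin 2) ℝ)
          - Matrix.fromBlocks X 0 0 Y).PosSemidef →
      ∀ (x y p q : EuclideanSpace ℝ (Fin 2)), p ≠ 0 → q ≠ 0 →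
        gvfHamiltonian σ β I H Vhat x p X - gvfHamiltonian σ β I H Vhat y q (-Y)
          ≥ -C * (μ₁ * (‖x - y‖ ^ 2 + ishiiSatoRho p q ^ 2) + μ₂ + ‖p - q‖
              + ‖x - y‖ * (1 + max ‖p‖ ‖q‖)) := by
  obtain ⟨c, m, Lg, hm, hc, hLg, hbd, hlip⟩ := edgeWeight_props σ hσ I hI hIc
  -- nonnegativity of the given constants
  have hMH : 0 ≤ MH := (abs_nonneg _).trans (hHbd 0)
  have hMV : 0 ≤ MV := (norm_nonneg _).trans (hVbd 0)
  have hone : ∃ e : EuclideanSpace ℝ (Fin 2), ‖e‖ ≠ 0 := by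
    refine ⟨EuclideanSpace.single (0 : Fin 2) (1:ℝ), ?_⟩
    rw [norm_ne_zero_iff]
    intro h
    have := congrArg (· 0) h
    simp [EuclideanSpace.single_apply] at this
  obtain ⟨e, he⟩ := hone
  have hen : 0 < ‖e‖ := lt_of_le_of_ne (norm_nonneg _) (Ne.symm he)
  have hKH : 0 ≤ KH := by
    have h1 := hHlip e 0
    have h2 := abs_nonneg (H e - H 0)
    rw [sub_zero] at h1
    nlinarith
  have hKV : 0 ≤ KV := by
    have h1 := hVlip e 0
    have h2 := norm_nonneg (Vhat e - Vhat 0)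
    rw [sub_zero] at h1
    nlinarith
  -- Lipschitz constant for sqrt of edgeWeight
  set Ls : ℝ := Lg / (2 * Real.sqrt m) with hLsdef
  have hsm : 0 < Real.sqrt m := Real.sqrt_pos.mpr hm
  have hLs : 0 ≤ Ls := div_nonneg hLg (by positivity)
  have hslip : ∀ x y, |Real.sqrt (edgeWeight σ I x) - Real.sqrt (edgeWeight σ I y)|
      ≤ Ls * ‖x - y‖ := by
    intro x y
    calc |Real.sqrt (edgeWeight σ I x) - Real.sqrt (edgeWeight σ I y)|
        ≤ |edgeWeight σ I x - edgeWeight σ I y| / (2 * Real.sqrt m) :=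
          sqrt_lip m _ _ hm (hbd x).1 (hbd y).1
      _ ≤ (Lg * ‖x - y‖) / (2 * Real.sqrt m) :=
          div_le_div_of_nonneg_right (hlip x y) (le_of_lt (by positivity : (0:ℝ) < 2 * Real.sqrt m))
      _ = Ls * ‖x - y‖ := by rw [hLsdef]; ring
  -- the constants
  set A1 : ℝ := β * (2 * Ls ^ 2 + 8 * c) with hA1def
  set A2 : ℝ := β * (2 * c) with hA2def
  set A3 : ℝ := c * MH + c * (1 + MH) * MV with hA3def
  set A4 : ℝ := (Lg * MH + c * KH) + (Lg * (1 + MH) + c * KH) * MV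
      + c * (1 + MH) * KV with hA4def
  have hA1 : 0 ≤ A1 := mul_nonneg hβ (by nlinarith [sq_nonneg Ls])
  have hA2 : 0 ≤ A2 := mul_nonneg hβ (by linarith)
  have hA3 : 0 ≤ A3 := by
    have : 0 ≤ c * MH := mul_nonneg hc.le hMH
    have : 0 ≤ c * (1 + MH) * MV := mul_nonneg (mul_nonneg hc.le (by linarith)) hMV
    nlinarith [mul_nonneg hc.le hMH]
  have hA4 : 0 ≤ A4 := by
    have k1 : 0 ≤ Lg * MH + c * KH := by
      nlinarith [mul_nonneg hLg hMH, mul_nonneg hc.le hKH]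
    have k2 : 0 ≤ (Lg * (1 + MH) + c * KH) * MV :=
      mul_nonneg (by nlinarith [mul_nonneg hLg hMH, mul_nonneg hc.le hKH]) hMV
    have k3 : 0 ≤ c * (1 + MH) * KV := mul_nonneg (mul_nonneg hc.le (by linarith)) hKV
    rw [hA4def]; linarith
  refine ⟨A1 + A2 + A3 + A4, by linarith, ?_⟩
  intro X Y hX hY μ₁ μ₂ hμ₁ hμ₂ hM x y p q hp hq
  have hgx := hbd x
  have hgy := hbd y
  have hgx0 : 0 ≤ edgeWeight σ I x := hm.le.trans hgx.1
  have hgy0 : 0 ≤ edgeWeight σ I y := hm.le.trans hgy.1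
  have hρ : 0 ≤ ishiiSatoRho p q := by
    unfold ishiiSatoRho
    exact le_min (div_nonneg (norm_nonneg _) (le_min (norm_nonneg _) (norm_nonneg _)))
      zero_le_one
  have hmax0 : 0 ≤ max ‖p‖ ‖q‖ := (norm_nonneg p).trans (le_max_left _ _)
  have hpmax : |‖p‖| ≤ 1 + max ‖p‖ ‖q‖ := by
    rw [abs_of_nonneg (norm_nonneg _)]
    have := le_max_left ‖p‖ ‖q‖; linarith
  -- second-order estimate
  have h2nd := second_order_est X Y μ₁ μ₂ hμ₁ hμ₂ hM p q hp hq
    (edgeWeight σ I x) (edgeWeight σ I y) c hgx0 hgy0 hgx.2 hgy.2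
    (Ls * ‖x - y‖) (mul_nonneg hLs (norm_nonneg _)) (hslip x y)
  -- hU : the trace part
  have hU : β * (edgeWeight σ I x * (projMatrix p * X).trace
        + edgeWeight σ I y * (projMatrix q * Y).trace)
      ≤ A1 * (μ₁ * (‖x - y‖ ^ 2 + ishiiSatoRho p q ^ 2)) + A2 * μ₂ := by
    have step := mul_le_mul_of_nonneg_left h2nd hβ
    have expand : β * (μ₁ * (2 * (Ls * ‖x - y‖) ^ 2 + 8 * c * ishiiSatoRho p q ^ 2)
          + μ₂ * (2 * c))
        ≤ A1 * (μ₁ * (‖x - y‖ ^ 2 + ishiiSatoRho p q ^ 2)) + A2 * μ₂ := by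
      rw [hA1def, hA2def]
      nlinarith [mul_nonneg (mul_nonneg hβ hμ₁)
          (mul_nonneg (sq_nonneg Ls) (sq_nonneg (ishiiSatoRho p q))),
        mul_nonneg (mul_nonneg hβ hμ₁) (mul_nonneg hc.le (sq_nonneg ‖x - y‖))]
    exact step.trans expand
  -- first-order estimate
  have e1 : |edgeWeight σ I x * H x - edgeWeight σ I y * H y|
      ≤ (Lg * MH + c * KH) * ‖x - y‖ := by
    have hid : edgeWeight σ I x * H x - edgeWeight σ I y * H y
        = (edgeWeight σ I x - edgeWeight σ I y) * H x
          + edgeWeight σ I y * (H x - H y) := by ring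
    rw [hid]
    calc |(edgeWeight σ I x - edgeWeight σ I y) * H x
          + edgeWeight σ I y * (H x - H y)|
        ≤ |(edgeWeight σ I x - edgeWeight σ I y) * H x|
          + |edgeWeight σ I y * (H x - H y)| := abs_add_le _ _
      _ = |edgeWeight σ I x - edgeWeight σ I y| * |H x|
          + |edgeWeight σ I y| * |H x - H y| := by rw [abs_mul, abs_mul]
      _ ≤ (Lg * ‖x - y‖) * MH + c * (KH * ‖x - y‖) := by
          apply add_le_add
          · exact mul_le_mul (hlip x y) (hHbd x) (abs_nonneg _)
              (mul_nonneg hLg (norm_nonneg _))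
          · apply mul_le_mul _ (hHlip x y) (abs_nonneg _) hc.le
            rw [abs_of_nonneg hgy0]; exact hgy.2
      _ = (Lg * MH + c * KH) * ‖x - y‖ := by ring
  have l1 := prod_lower (edgeWeight σ I x * H x - edgeWeight σ I y * H y) ‖p‖
    ((Lg * MH + c * KH) * ‖x - y‖) (1 + max ‖p‖ ‖q‖) e1 hpmax
  have l2 : -((c * MH) * ‖p - q‖) ≤ (edgeWeight σ I y * H y) * (‖p‖ - ‖q‖) := by
    apply prod_lower
    · rw [abs_mul]
      apply mul_le_mul _ (hHbd y) (abs_nonneg _) hc.le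
      rw [abs_of_nonneg hgy0]; exact hgy.2
    · exact abs_norm_sub_norm_le p q
  -- third term
  have habs1 : ∀ z : EuclideanSpace ℝ (Fin 2), abs (1 - |H z|) ≤ 1 + MH := by
    intro z
    have h1 := abs_nonneg (H z)
    have h2 := hHbd z
    rw [abs_le]
    exact ⟨by linarith, by linarith⟩
  have b1 : |edgeWeight σ I x * (1 - |H x|) - edgeWeight σ I y * (1 - |H y|)|
      ≤ (Lg * (1 + MH) + c * KH) * ‖x - y‖ := by
    have hid : edgeWeight σ I x * (1 - |H x|) - edgeWeight σ I y * (1 - |H y|)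
        = (edgeWeight σ I x - edgeWeight σ I y) * (1 - |H x|)
          + edgeWeight σ I y * (|H y| - |H x|) := by ring
    rw [hid]
    calc |(edgeWeight σ I x - edgeWeight σ I y) * (1 - |H x|)
          + edgeWeight σ I y * (|H y| - |H x|)|
        ≤ |(edgeWeight σ I x - edgeWeight σ I y) * (1 - |H x|)|
          + |edgeWeight σ I y * (|H y| - |H x|)| := abs_add_le _ _
      _ = |edgeWeight σ I x - edgeWeight σ I y| * abs (1 - |H x|)
          + |edgeWeight σ I y| * abs (|H y| - |H x|) := by rw [abs_mul, abs_mul]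
      _ ≤ (Lg * ‖x - y‖) * (1 + MH) + c * (KH * ‖x - y‖) := by
          apply add_le_add
          · exact mul_le_mul (hlip x y) (habs1 x) (abs_nonneg _)
              (mul_nonneg hLg (norm_nonneg _))
          · apply mul_le_mul _ _ (abs_nonneg _) hc.le
            · rw [abs_of_nonneg hgy0]; exact hgy.2
            · calc abs (|H y| - |H x|) ≤ |H y - H x| := abs_abs_sub_abs_le_abs_sub _ _
                _ ≤ KH * ‖y - x‖ := hHlip y x
                _ = KH * ‖x - y‖ := by rw [norm_sub_rev]
      _ = (Lg * (1 + MH) + c * KH) * ‖x - y‖ := by ring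
  have b2 : |⟪Vhat x, p⟫| ≤ MV * (1 + max ‖p‖ ‖q‖) := by
    calc |⟪Vhat x, p⟫| ≤ ‖Vhat x‖ * ‖p‖ := abs_real_inner_le_norm _ _
      _ ≤ MV * (1 + max ‖p‖ ‖q‖) := by
          apply mul_le_mul (hVbd x) _ (norm_nonneg _) hMV
          have := le_max_left ‖p‖ ‖q‖; linarith
  have b3 : |edgeWeight σ I y * (1 - |H y|)| ≤ c * (1 + MH) := by
    rw [abs_mul]
    apply mul_le_mul _ (habs1 y) (abs_nonneg _) hc.le
    rw [abs_of_nonneg hgy0]; exact hgy.2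
  have b4 : |⟪Vhat x - Vhat y, p⟫| ≤ (KV * ‖x - y‖) * (1 + max ‖p‖ ‖q‖) := by
    calc |⟪Vhat x - Vhat y, p⟫| ≤ ‖Vhat x - Vhat y‖ * ‖p‖ := abs_real_inner_le_norm _ _
      _ ≤ (KV * ‖x - y‖) * (1 + max ‖p‖ ‖q‖) := by
          apply mul_le_mul (hVlip x y) _ (norm_nonneg _)
            (mul_nonneg hKV (norm_nonneg _))
          have := le_max_left ‖p‖ ‖q‖; linarith
  have b5 : |⟪Vhat y, p - q⟫| ≤ MV * ‖p - q‖ := by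
    calc |⟪Vhat y, p - q⟫| ≤ ‖Vhat y‖ * ‖p - q‖ := abs_real_inner_le_norm _ _
      _ ≤ MV * ‖p - q‖ := mul_le_mul_of_nonneg_right (hVbd y) (norm_nonneg _)
  have l3 := prod_lower (edgeWeight σ I x * (1 - |H x|) - edgeWeight σ I y * (1 - |H y|))
    (⟪Vhat x, p⟫) ((Lg * (1 + MH) + c * KH) * ‖x - y‖) (MV * (1 + max ‖p‖ ‖q‖)) b1 b2
  have l4 := prod_lower (edgeWeight σ I y * (1 - |H y|)) (⟪Vhat x - Vhat y, p⟫)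
    (c * (1 + MH)) ((KV * ‖x - y‖) * (1 + max ‖p‖ ‖q‖)) b3 b4
  have l5 := prod_lower (edgeWeight σ I y * (1 - |H y|)) (⟪Vhat y, p - q⟫)
    (c * (1 + MH)) (MV * ‖p - q‖) b3 b5
  -- inner product decompositions
  have hip1 : ⟪Vhat x - Vhat y, p⟫ = ⟪Vhat x, p⟫ - ⟪Vhat y, p⟫ := inner_sub_left _ _ _
  have hip2 : ⟪Vhat y, p - q⟫ = ⟪Vhat y, p⟫ - ⟪Vhat y, q⟫ := inner_sub_right _ _ _
  -- combined first+third order bound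
  have hT : -(A4 * (‖x - y‖ * (1 + max ‖p‖ ‖q‖)) + A3 * ‖p - q‖)
      ≤ (edgeWeight σ I x * H x * ‖p‖ - edgeWeight σ I y * H y * ‖q‖)
        + (edgeWeight σ I x * (1 - |H x|) * ⟪Vhat x, p⟫
          - edgeWeight σ I y * (1 - |H y|) * ⟪Vhat y, q⟫) := by
    have hid1 : edgeWeight σ I x * H x * ‖p‖ - edgeWeight σ I y * H y * ‖q‖
        = (edgeWeight σ I x * H x - edgeWeight σ I y * H y) * ‖p‖
          + (edgeWeight σ I y * H y) * (‖p‖ - ‖q‖) := by ring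
    have hid2 : edgeWeight σ I x * (1 - |H x|) * ⟪Vhat x, p⟫
          - edgeWeight σ I y * (1 - |H y|) * ⟪Vhat y, q⟫
        = (edgeWeight σ I x * (1 - |H x|) - edgeWeight σ I y * (1 - |H y|)) * ⟪Vhat x, p⟫
          + edgeWeight σ I y * (1 - |H y|) * ⟪Vhat x - Vhat y, p⟫
          + edgeWeight σ I y * (1 - |H y|) * ⟪Vhat y, p - q⟫ := by
      rw [hip1, hip2]; ring
    rw [hid1, hid2, hA3def, hA4def]
    linarith [l1, l2, l3, l4, l5]
  -- final assembly
  have hgoal_eq : gvfHamiltonian σ β I H Vhat x p X - gvfHamiltonian σ β I H Vhat y q (-Y)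
      = ((edgeWeight σ I x * H x * ‖p‖ - edgeWeight σ I y * H y * ‖q‖)
          + (edgeWeight σ I x * (1 - |H x|) * ⟪Vhat x, p⟫
            - edgeWeight σ I y * (1 - |H y|) * ⟪Vhat y, q⟫))
        - β * (edgeWeight σ I x * (projMatrix p * X).trace
          + edgeWeight σ I y * (projMatrix q * Y).trace) := by
    simp only [gvfHamiltonian, Matrix.mul_neg, Matrix.trace_neg]
    ring
  have hS1 : 0 ≤ μ₁ * (‖x - y‖ ^ 2 + ishiiSatoRho p q ^ 2) :=
    mul_nonneg hμ₁ (by positivity)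
  have hS4 : 0 ≤ ‖x - y‖ * (1 + max ‖p‖ ‖q‖) :=
    mul_nonneg (norm_nonneg _) (by linarith)
  have hcomb := combine16 A1 A2 A3 A4 (μ₁ * (‖x - y‖ ^ 2 + ishiiSatoRho p q ^ 2)) μ₂
    ‖p - q‖ (‖x - y‖ * (1 + max ‖p‖ ‖q‖)) _ _
    hA1 hA2 hA3 hA4 hS1 hμ₂ (norm_nonneg _) hS4 hT hU
  rw [ge_iff_le, hgoal_eq]
  calc -(A1 + A2 + A3 + A4) * (μ₁ * (‖x - y‖ ^ 2 + ishiiSatoRho p q ^ 2) + μ₂ + ‖p - q‖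
        + ‖x - y‖ * (1 + max ‖p‖ ‖q‖))
      = -((A1 + A2 + A3 + A4) * (μ₁ * (‖x - y‖ ^ 2 + ishiiSatoRho p q ^ 2) + μ₂ + ‖p - q‖
        + ‖x - y‖ * (1 + max ‖p‖ ‖q‖))) := by ring
    _ ≤ _ := hcomb
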